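/- For γ = -2 and constants c > 0, a = 3/(8c), the function u(x,t) = -2(√((ct² - a)/x) - 1) solves u_tt = [(1 + u/γ)^{γ-1}]_xx, i.e., u_tt = [(1 - u/2)^{-3}]_xx, on the domain where x > 0 and ct² - a > 0. -/

import Mathlib

/-- for γ = -2, c > 0, a = 3/(8c), the function
u(x,t) = -2(√((ct² - a)/x) - 1) solves u_tt = [(1 - u/2)^{-3}]_xx on x > 0, ct² > a. -/
theorem stmt_7 (c a : ℝ) (hc : 0 < c) (ha : a = 3 / (8 * c))
    (u : ℝ → ℝ → ℝ)
    (hu : ∀ x t, u x t = -2 * (Real.sqrt ((c * t ^ 2 - a) / x) - 1)) :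
    ∀ x t : ℝ, 0 < x → a < c * t ^ 2 →
      deriv (deriv (fun s => u x s)) t
        = deriv (deriv (fun s => (1 - u s t / 2) ^ (-3 : ℝ))) x := by
  intro x t hx hat
  have hPpos : 0 < c * t ^ 2 - a := sub_pos.mpr hat
  set P : ℝ := c * t ^ 2 - a with hP
  have hsx : 0 < Real.sqrt x := Real.sqrt_pos.mpr hx
  have hsP : 0 < Real.sqrt P := Real.sqrt_pos.mpr hPpos
  -- the set of good times is open
  have hSopen : IsOpen {s : ℝ | 0 < c * s ^ 2 - a} := by
    have hcont : Continuous fun s : ℝ => c * s ^ 2 - a := by continuity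
    exact isOpen_lt continuous_const hcont
  -- rewrite u x · globally
  have hux : (fun s => u x s) = fun s => -2 * (Real.sqrt (c * s ^ 2 - a) / Real.sqrt x - 1) := by
    funext s
    rw [hu, Real.sqrt_div' _ (le_of_lt hx)]
  -- first t-derivative on the open set
  have hF : ∀ s : ℝ, 0 < c * s ^ 2 - a →
      HasDerivAt (fun s => u x s)
        ((-2 * c / Real.sqrt x) * (s / Real.sqrt (c * s ^ 2 - a))) s := by
    intro s hs
    have hQ : 0 < Real.sqrt (c * s ^ 2 - a) := Real.sqrt_pos.mpr hs
    rw [hux]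
    have h1 : HasDerivAt (fun s : ℝ => c * s ^ 2 - a) (c * (2 * s ^ 1)) s := by
      exact ((hasDerivAt_pow 2 s).const_mul c).sub_const a
    have h2 : HasDerivAt (fun s : ℝ => Real.sqrt (c * s ^ 2 - a))
        (1 / (2 * Real.sqrt (c * s ^ 2 - a)) * (c * (2 * s ^ 1))) s :=
      (Real.hasDerivAt_sqrt (ne_of_gt hs)).comp s h1
    have h3 := ((h2.div_const (Real.sqrt x)).sub_const 1).const_mul (-2 : ℝ)
    refine h3.congr_deriv ?_
    field_simp
  -- hence the first derivative agrees with an explicit function near t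
  have hg : deriv (fun s => u x s) =ᶠ[nhds t]
      fun s => (-2 * c / Real.sqrt x) * (s / Real.sqrt (c * s ^ 2 - a)) := by
    filter_upwards [hSopen.mem_nhds hPpos] with s hs
    exact (hF s hs).deriv
  -- second t-derivative
  have hLHS : deriv (deriv (fun s => u x s)) t
      = (-2 * c / Real.sqrt x) *
        ((1 * Real.sqrt P - t * (1 / (2 * Real.sqrt P) * (c * (2 * t ^ 1)))) / Real.sqrt P ^ 2) := by
    rw [hg.deriv_eq]
    have h1 : HasDerivAt (fun s : ℝ => c * s ^ 2 - a) (c * (2 * t ^ 1)) t :=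
      ((hasDerivAt_pow 2 t).const_mul c).sub_const a
    have h2 : HasDerivAt (fun s : ℝ => Real.sqrt (c * s ^ 2 - a))
        (1 / (2 * Real.sqrt (c * t ^ 2 - a)) * (c * (2 * t ^ 1))) t :=
      (Real.hasDerivAt_sqrt (ne_of_gt hPpos)).comp t h1
    have h3 := ((hasDerivAt_id t).div h2 (ne_of_gt hsP)).const_mul (-2 * c / Real.sqrt x)
    exact h3.deriv
  -- now the x-side
  have hbase : ∀ y : ℝ, 1 - u y t / 2 = Real.sqrt (P / y) := by
    intro y
    rw [hu]
    ring
  have hHset : ∀ y : ℝ, 0 < y →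
      (1 - u y t / 2) ^ (-3 : ℝ) = P ^ (-((3:ℝ)/2)) * y ^ ((3:ℝ)/2) := by
    intro y hy
    rw [hbase y, Real.sqrt_eq_rpow, ← Real.rpow_mul (by positivity),
      show (1/(2:ℝ)) * (-3) = -((3:ℝ)/2) by norm_num,
      Real.rpow_neg (by positivity), Real.div_rpow hPpos.le hy.le,
      Real.rpow_neg hPpos.le]
    rw [div_eq_mul_inv, mul_inv, inv_inv]
  have hder1 : deriv (fun s => (1 - u s t / 2) ^ (-3 : ℝ)) =ᶠ[nhds x]
      fun y => P ^ (-((3:ℝ)/2)) * ((3:ℝ)/2 * y ^ ((3:ℝ)/2 - 1)) := by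
    filter_upwards [Ioi_mem_nhds hx] with y hy
    have hy0 : (0:ℝ) < y := hy
    have heq : (fun s => (1 - u s t / 2) ^ (-3 : ℝ)) =ᶠ[nhds y]
        fun s => P ^ (-((3:ℝ)/2)) * s ^ ((3:ℝ)/2) := by
      filter_upwards [Ioi_mem_nhds hy0] with z hz using hHset z hz
    rw [heq.deriv_eq]
    exact ((Real.hasDerivAt_rpow_const (p := (3:ℝ)/2)
      (Or.inl (ne_of_gt hy0))).const_mul (P ^ (-((3:ℝ)/2)))).deriv
  have hRHS : deriv (deriv (fun s => (1 - u s t / 2) ^ (-3 : ℝ))) x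
      = P ^ (-((3:ℝ)/2)) * ((3:ℝ)/2 * (((3:ℝ)/2 - 1) * x ^ ((3:ℝ)/2 - 1 - 1))) := by
    rw [hder1.deriv_eq]
    have h1 : HasDerivAt (fun y : ℝ => y ^ ((3:ℝ)/2 - 1))
        (((3:ℝ)/2 - 1) * x ^ ((3:ℝ)/2 - 1 - 1)) x :=
      Real.hasDerivAt_rpow_const (Or.inl (ne_of_gt hx))
    exact ((h1.const_mul ((3:ℝ)/2)).const_mul (P ^ (-((3:ℝ)/2)))).deriv
  rw [hLHS, hRHS]
  -- turn rpows into sqrts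
  have e1 : x ^ ((3:ℝ)/2 - 1 - 1) = (Real.sqrt x)⁻¹ := by
    rw [show (3:ℝ)/2 - 1 - 1 = -(1/2) by norm_num,
      Real.rpow_neg hx.le, ← Real.sqrt_eq_rpow]
  have e2 : P ^ (-((3:ℝ)/2)) = (Real.sqrt P * P)⁻¹ := by
    rw [Real.rpow_neg hPpos.le, show (3:ℝ)/2 = 1/2 + 1 by norm_num,
      Real.rpow_add hPpos, ← Real.sqrt_eq_rpow, Real.rpow_one]
  rw [e1, e2, Real.sq_sqrt hPpos.le]
  have hsq : Real.sqrt P * Real.sqrt P = P := Real.mul_self_sqrt hPpos.le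
  have hc' : c ≠ 0 := ne_of_gt hc
  have hP' : P ≠ 0 := ne_of_gt hPpos
  have hx' : x ≠ 0 := ne_of_gt hx
  have key : 1 * Real.sqrt P - t * (1 / (2 * Real.sqrt P) * (c * (2 * t ^ 1)))
      = -a / Real.sqrt P := by
    rw [eq_div_iff (ne_of_gt hsP)]
    have ht2 : c * t ^ 2 = P + a := by rw [hP]; ring
    field_simp
    nlinarith [hsq, ht2]
  rw [key, ha]
  have h32 : (3:ℝ)/2 - 1 = 1/2 := by norm_num
  rw [h32]
  field_simp
  ring
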